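/- The mutation class of the quiver D_4 contains exactly 6 quivers up to isomorphism. -/

import Mathlib

/-- Fomin–Zelevinsky matrix mutation of a skew-symmetric integer matrix
(encoding a quiver with no loops and no 2-cycles) at the vertex `k`. -/
def mutate {m : ℕ} (B : Matrix (Fin m) (Fin m) ℤ) (k : Fin m) :
    Matrix (Fin m) (Fin m) ℤ :=
  fun i j =>
    if i = k ∨ j = k then -B i j
    else B i j + (|B i k| * B k j + B i k * |B k j|) / 2

/-- Two quivers are mutation equivalent if one is obtained from the other by a
finite sequence of mutations. -/
def MutationEquiv {m : ℕ} (B B' : Matrix (Fin m) (Fin m) ℤ) : Prop :=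
  Relation.ReflTransGen (fun C C' => ∃ k, C' = mutate C k) B B'

/-- Isomorphism of quivers: simultaneous permutation of rows and columns of the
encoding matrices. -/
def QuiverIso {m : ℕ} (B B' : Matrix (Fin m) (Fin m) ℤ) : Prop :=
  ∃ σ : Equiv.Perm (Fin m), ∀ i j, B' (σ i) (σ j) = B i j

/-- The quiver `D_4`: three vertices, each with an arrow to a central vertex. -/
def BD4 : Matrix (Fin 4) (Fin 4) ℤ :=
  fun i j =>
    if i ≠ 0 ∧ j = 0 then 1 else if i = 0 ∧ j ≠ 0 then -1 else 0


def M0 : Matrix (Fin 4) (Fin 4) ℤ := !![0,-1,-1,-1;1,0,0,0;1,0,0,0;1,0,0,0]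
def M1 : Matrix (Fin 4) (Fin 4) ℤ := !![0,1,1,1;-1,0,0,0;-1,0,0,0;-1,0,0,0]
def M2 : Matrix (Fin 4) (Fin 4) ℤ := !![0,1,-1,-1;-1,0,0,0;1,0,0,0;1,0,0,0]
def M3 : Matrix (Fin 4) (Fin 4) ℤ := !![0,-1,1,-1;1,0,0,0;-1,0,0,0;1,0,0,0]
def M4 : Matrix (Fin 4) (Fin 4) ℤ := !![0,-1,-1,1;1,0,0,0;1,0,0,0;-1,0,0,0]
def M5 : Matrix (Fin 4) (Fin 4) ℤ := !![0,-1,1,1;1,0,0,0;-1,0,0,0;-1,0,0,0]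
def M6 : Matrix (Fin 4) (Fin 4) ℤ := !![0,1,-1,1;-1,0,0,0;1,0,0,0;-1,0,0,0]
def M7 : Matrix (Fin 4) (Fin 4) ℤ := !![0,1,1,-1;-1,0,0,0;-1,0,0,0;1,0,0,0]
def M8 : Matrix (Fin 4) (Fin 4) ℤ := !![0,-1,1,1;1,0,-1,-1;-1,1,0,0;-1,1,0,0]
def M9 : Matrix (Fin 4) (Fin 4) ℤ := !![0,1,-1,1;-1,0,1,0;1,-1,0,-1;-1,0,1,0]
def M10 : Matrix (Fin 4) (Fin 4) ℤ := !![0,1,1,-1;-1,0,0,1;-1,0,0,1;1,-1,-1,0]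
def M11 : Matrix (Fin 4) (Fin 4) ℤ := !![0,1,-1,-1;-1,0,1,1;1,-1,0,0;1,-1,0,0]
def M12 : Matrix (Fin 4) (Fin 4) ℤ := !![0,-1,1,-1;1,0,-1,0;-1,1,0,1;1,0,-1,0]
def M13 : Matrix (Fin 4) (Fin 4) ℤ := !![0,-1,-1,1;1,0,0,-1;1,0,0,-1;-1,1,1,0]
def M14 : Matrix (Fin 4) (Fin 4) ℤ := !![0,1,0,0;-1,0,1,1;0,-1,0,0;0,-1,0,0]
def M15 : Matrix (Fin 4) (Fin 4) ℤ := !![0,0,-1,1;0,0,1,-1;1,-1,0,0;-1,1,0,0]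
def M16 : Matrix (Fin 4) (Fin 4) ℤ := !![0,0,1,-1;0,0,-1,1;-1,1,0,0;1,-1,0,0]
def M17 : Matrix (Fin 4) (Fin 4) ℤ := !![0,-1,0,1;1,0,-1,0;0,1,0,-1;-1,0,1,0]
def M18 : Matrix (Fin 4) (Fin 4) ℤ := !![0,0,1,0;0,0,-1,0;-1,1,0,1;0,0,-1,0]
def M19 : Matrix (Fin 4) (Fin 4) ℤ := !![0,1,0,-1;-1,0,1,0;0,-1,0,1;1,0,-1,0]
def M20 : Matrix (Fin 4) (Fin 4) ℤ := !![0,-1,1,0;1,0,0,-1;-1,0,0,1;0,1,-1,0]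
def M21 : Matrix (Fin 4) (Fin 4) ℤ := !![0,1,-1,0;-1,0,0,1;1,0,0,-1;0,-1,1,0]
def M22 : Matrix (Fin 4) (Fin 4) ℤ := !![0,0,0,1;0,0,0,-1;0,0,0,-1;-1,1,1,0]
def M23 : Matrix (Fin 4) (Fin 4) ℤ := !![0,-1,0,0;1,0,-1,-1;0,1,0,0;0,1,0,0]
def M24 : Matrix (Fin 4) (Fin 4) ℤ := !![0,0,-1,0;0,0,1,0;1,-1,0,-1;0,0,1,0]
def M25 : Matrix (Fin 4) (Fin 4) ℤ := !![0,0,0,-1;0,0,0,1;0,0,0,1;1,-1,-1,0]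
def M26 : Matrix (Fin 4) (Fin 4) ℤ := !![0,-1,0,0;1,0,1,1;0,-1,0,0;0,-1,0,0]
def M27 : Matrix (Fin 4) (Fin 4) ℤ := !![0,1,0,0;-1,0,-1,1;0,1,0,0;0,-1,0,0]
def M28 : Matrix (Fin 4) (Fin 4) ℤ := !![0,1,0,0;-1,0,1,-1;0,-1,0,0;0,1,0,0]
def M29 : Matrix (Fin 4) (Fin 4) ℤ := !![0,0,1,-1;0,0,1,-1;-1,-1,0,1;1,1,-1,0]
def M30 : Matrix (Fin 4) (Fin 4) ℤ := !![0,0,-1,1;0,0,-1,1;1,1,0,-1;-1,-1,1,0]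
def M31 : Matrix (Fin 4) (Fin 4) ℤ := !![0,1,0,-1;-1,0,-1,1;0,1,0,-1;1,-1,1,0]
def M32 : Matrix (Fin 4) (Fin 4) ℤ := !![0,-1,0,1;1,0,1,-1;0,-1,0,1;-1,1,-1,0]
def M33 : Matrix (Fin 4) (Fin 4) ℤ := !![0,0,-1,0;0,0,-1,0;1,1,0,1;0,0,-1,0]
def M34 : Matrix (Fin 4) (Fin 4) ℤ := !![0,0,1,0;0,0,1,0;-1,-1,0,1;0,0,-1,0]
def M35 : Matrix (Fin 4) (Fin 4) ℤ := !![0,0,1,0;0,0,-1,0;-1,1,0,-1;0,0,1,0]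
def M36 : Matrix (Fin 4) (Fin 4) ℤ := !![0,1,-1,0;-1,0,1,-1;1,-1,0,1;0,1,-1,0]
def M37 : Matrix (Fin 4) (Fin 4) ℤ := !![0,-1,1,0;1,0,-1,1;-1,1,0,-1;0,-1,1,0]
def M38 : Matrix (Fin 4) (Fin 4) ℤ := !![0,0,0,-1;0,0,0,-1;0,0,0,-1;1,1,1,0]
def M39 : Matrix (Fin 4) (Fin 4) ℤ := !![0,0,0,1;0,0,0,1;0,0,0,-1;-1,-1,1,0]
def M40 : Matrix (Fin 4) (Fin 4) ℤ := !![0,0,0,1;0,0,0,-1;0,0,0,1;-1,1,-1,0]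
def M41 : Matrix (Fin 4) (Fin 4) ℤ := !![0,1,0,0;-1,0,-1,-1;0,1,0,0;0,1,0,0]
def M42 : Matrix (Fin 4) (Fin 4) ℤ := !![0,-1,0,0;1,0,1,-1;0,-1,0,0;0,1,0,0]
def M43 : Matrix (Fin 4) (Fin 4) ℤ := !![0,-1,0,0;1,0,-1,1;0,1,0,0;0,-1,0,0]
def M44 : Matrix (Fin 4) (Fin 4) ℤ := !![0,0,1,0;0,0,1,0;-1,-1,0,-1;0,0,1,0]
def M45 : Matrix (Fin 4) (Fin 4) ℤ := !![0,0,-1,0;0,0,-1,0;1,1,0,-1;0,0,1,0]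
def M46 : Matrix (Fin 4) (Fin 4) ℤ := !![0,0,-1,0;0,0,1,0;1,-1,0,1;0,0,-1,0]
def M47 : Matrix (Fin 4) (Fin 4) ℤ := !![0,0,0,1;0,0,0,1;0,0,0,1;-1,-1,-1,0]
def M48 : Matrix (Fin 4) (Fin 4) ℤ := !![0,0,0,-1;0,0,0,-1;0,0,0,1;1,1,-1,0]
def M49 : Matrix (Fin 4) (Fin 4) ℤ := !![0,0,0,-1;0,0,0,1;0,0,0,-1;1,-1,1,0]
def L : List (Matrix (Fin 4) (Fin 4) ℤ) := [M0,M1,M2,M3,M4,M5,M6,M7,M8,M9,M10,M11,M12,M13,M14,M15,M16,M17,M18,M19,M20,M21,M22,M23,M24,M25,M26,M27,M28,M29,M30,M31,M32,M33,M34,M35,M36,M37,M38,M39,M40,M41,M42,M43,M44,M45,M46,M47,M48,M49]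
def RepQ : Fin 6 → Matrix (Fin 4) (Fin 4) ℤ := ![M0,M1,M2,M5,M8,M15]
def C0 : List (Matrix (Fin 4) (Fin 4) ℤ) := [M0,M41,M44,M47]
def C1 : List (Matrix (Fin 4) (Fin 4) ℤ) := [M1,M26,M33,M38]
def C2 : List (Matrix (Fin 4) (Fin 4) ℤ) := [M2,M3,M4,M23,M24,M25,M27,M28,M34,M35,M39,M40]
def C3 : List (Matrix (Fin 4) (Fin 4) ℤ) := [M5,M6,M7,M14,M18,M22,M42,M43,M45,M46,M48,M49]
def C4 : List (Matrix (Fin 4) (Fin 4) ℤ) := [M8,M9,M10,M11,M12,M13,M29,M30,M31,M32,M36,M37]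
def C5 : List (Matrix (Fin 4) (Fin 4) ℤ) := [M15,M16,M17,M19,M20,M21]
def cls (B : Matrix (Fin 4) (Fin 4) ℤ) : Fin 6 :=
  if B ∈ C0 then 0 else if B ∈ C1 then 1 else if B ∈ C2 then 2
  else if B ∈ C3 then 3 else if B ∈ C4 then 4 else 5

theorem hM0 : MutationEquiv BD4 M0 := (by decide : BD4 = M0) ▸ Relation.ReflTransGen.refl
theorem hM1 : MutationEquiv BD4 M1 := hM0.tail ⟨0, by decide⟩
theorem hM2 : MutationEquiv BD4 M2 := hM0.tail ⟨1, by decide⟩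
theorem hM3 : MutationEquiv BD4 M3 := hM0.tail ⟨2, by decide⟩
theorem hM4 : MutationEquiv BD4 M4 := hM0.tail ⟨3, by decide⟩
theorem hM5 : MutationEquiv BD4 M5 := hM1.tail ⟨1, by decide⟩
theorem hM6 : MutationEquiv BD4 M6 := hM1.tail ⟨2, by decide⟩
theorem hM7 : MutationEquiv BD4 M7 := hM1.tail ⟨3, by decide⟩
theorem hM8 : MutationEquiv BD4 M8 := hM2.tail ⟨0, by decide⟩
theorem hM9 : MutationEquiv BD4 M9 := hM3.tail ⟨0, by decide⟩
theorem hM10 : MutationEquiv BD4 M10 := hM4.tail ⟨0, by decide⟩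
theorem hM11 : MutationEquiv BD4 M11 := hM5.tail ⟨0, by decide⟩
theorem hM12 : MutationEquiv BD4 M12 := hM6.tail ⟨0, by decide⟩
theorem hM13 : MutationEquiv BD4 M13 := hM7.tail ⟨0, by decide⟩
theorem hM14 : MutationEquiv BD4 M14 := hM8.tail ⟨1, by decide⟩
theorem hM15 : MutationEquiv BD4 M15 := hM8.tail ⟨2, by decide⟩
theorem hM16 : MutationEquiv BD4 M16 := hM8.tail ⟨3, by decide⟩
theorem hM17 : MutationEquiv BD4 M17 := hM9.tail ⟨1, by decide⟩
theorem hM18 : MutationEquiv BD4 M18 := hM9.tail ⟨2, by decide⟩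
theorem hM19 : MutationEquiv BD4 M19 := hM9.tail ⟨3, by decide⟩
theorem hM20 : MutationEquiv BD4 M20 := hM10.tail ⟨1, by decide⟩
theorem hM21 : MutationEquiv BD4 M21 := hM10.tail ⟨2, by decide⟩
theorem hM22 : MutationEquiv BD4 M22 := hM10.tail ⟨3, by decide⟩
theorem hM23 : MutationEquiv BD4 M23 := hM11.tail ⟨1, by decide⟩
theorem hM24 : MutationEquiv BD4 M24 := hM12.tail ⟨2, by decide⟩
theorem hM25 : MutationEquiv BD4 M25 := hM13.tail ⟨3, by decide⟩
theorem hM26 : MutationEquiv BD4 M26 := hM14.tail ⟨0, by decide⟩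
theorem hM27 : MutationEquiv BD4 M27 := hM14.tail ⟨2, by decide⟩
theorem hM28 : MutationEquiv BD4 M28 := hM14.tail ⟨3, by decide⟩
theorem hM29 : MutationEquiv BD4 M29 := hM15.tail ⟨0, by decide⟩
theorem hM30 : MutationEquiv BD4 M30 := hM15.tail ⟨1, by decide⟩
theorem hM31 : MutationEquiv BD4 M31 := hM17.tail ⟨0, by decide⟩
theorem hM32 : MutationEquiv BD4 M32 := hM17.tail ⟨2, by decide⟩
theorem hM33 : MutationEquiv BD4 M33 := hM18.tail ⟨0, by decide⟩
theorem hM34 : MutationEquiv BD4 M34 := hM18.tail ⟨1, by decide⟩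
theorem hM35 : MutationEquiv BD4 M35 := hM18.tail ⟨3, by decide⟩
theorem hM36 : MutationEquiv BD4 M36 := hM20.tail ⟨0, by decide⟩
theorem hM37 : MutationEquiv BD4 M37 := hM20.tail ⟨3, by decide⟩
theorem hM38 : MutationEquiv BD4 M38 := hM22.tail ⟨0, by decide⟩
theorem hM39 : MutationEquiv BD4 M39 := hM22.tail ⟨1, by decide⟩
theorem hM40 : MutationEquiv BD4 M40 := hM22.tail ⟨2, by decide⟩
theorem hM41 : MutationEquiv BD4 M41 := hM23.tail ⟨0, by decide⟩
theorem hM42 : MutationEquiv BD4 M42 := hM23.tail ⟨2, by decide⟩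
theorem hM43 : MutationEquiv BD4 M43 := hM23.tail ⟨3, by decide⟩
theorem hM44 : MutationEquiv BD4 M44 := hM24.tail ⟨0, by decide⟩
theorem hM45 : MutationEquiv BD4 M45 := hM24.tail ⟨1, by decide⟩
theorem hM46 : MutationEquiv BD4 M46 := hM24.tail ⟨3, by decide⟩
theorem hM47 : MutationEquiv BD4 M47 := hM25.tail ⟨0, by decide⟩
theorem hM48 : MutationEquiv BD4 M48 := hM25.tail ⟨1, by decide⟩
theorem hM49 : MutationEquiv BD4 M49 := hM25.tail ⟨2, by decide⟩
theorem iso0 : QuiverIso (RepQ (cls M0)) M0 := ⟨Equiv.mk ![0,1,2,3] ![0,1,2,3] (by decide) (by decide), by rw [Fin.forall_fin_succ]; decide⟩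
theorem iso1 : QuiverIso (RepQ (cls M1)) M1 := ⟨Equiv.mk ![0,1,2,3] ![0,1,2,3] (by decide) (by decide), by rw [Fin.forall_fin_succ]; decide⟩
theorem iso2 : QuiverIso (RepQ (cls M2)) M2 := ⟨Equiv.mk ![0,1,2,3] ![0,1,2,3] (by decide) (by decide), by rw [Fin.forall_fin_succ]; decide⟩
theorem iso3 : QuiverIso (RepQ (cls M3)) M3 := ⟨Equiv.mk ![0,2,1,3] ![0,2,1,3] (by decide) (by decide), by rw [Fin.forall_fin_succ]; decide⟩
theorem iso4 : QuiverIso (RepQ (cls M4)) M4 := ⟨Equiv.mk ![0,3,1,2] ![0,2,3,1] (by decide) (by decide), by rw [Fin.forall_fin_succ]; decide⟩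
theorem iso5 : QuiverIso (RepQ (cls M5)) M5 := ⟨Equiv.mk ![0,1,2,3] ![0,1,2,3] (by decide) (by decide), by rw [Fin.forall_fin_succ]; decide⟩
theorem iso6 : QuiverIso (RepQ (cls M6)) M6 := ⟨Equiv.mk ![0,2,1,3] ![0,2,1,3] (by decide) (by decide), by rw [Fin.forall_fin_succ]; decide⟩
theorem iso7 : QuiverIso (RepQ (cls M7)) M7 := ⟨Equiv.mk ![0,3,1,2] ![0,2,3,1] (by decide) (by decide), by rw [Fin.forall_fin_succ]; decide⟩
theorem iso8 : QuiverIso (RepQ (cls M8)) M8 := ⟨Equiv.mk ![0,1,2,3] ![0,1,2,3] (by decide) (by decide), by rw [Fin.forall_fin_succ]; decide⟩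
theorem iso9 : QuiverIso (RepQ (cls M9)) M9 := ⟨Equiv.mk ![0,2,1,3] ![0,2,1,3] (by decide) (by decide), by rw [Fin.forall_fin_succ]; decide⟩
theorem iso10 : QuiverIso (RepQ (cls M10)) M10 := ⟨Equiv.mk ![0,3,1,2] ![0,2,3,1] (by decide) (by decide), by rw [Fin.forall_fin_succ]; decide⟩
theorem iso11 : QuiverIso (RepQ (cls M11)) M11 := ⟨Equiv.mk ![1,0,2,3] ![1,0,2,3] (by decide) (by decide), by rw [Fin.forall_fin_succ]; decide⟩
theorem iso12 : QuiverIso (RepQ (cls M12)) M12 := ⟨Equiv.mk ![2,0,1,3] ![1,2,0,3] (by decide) (by decide), by rw [Fin.forall_fin_succ]; decide⟩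
theorem iso13 : QuiverIso (RepQ (cls M13)) M13 := ⟨Equiv.mk ![3,0,1,2] ![1,2,3,0] (by decide) (by decide), by rw [Fin.forall_fin_succ]; decide⟩
theorem iso14 : QuiverIso (RepQ (cls M14)) M14 := ⟨Equiv.mk ![1,0,2,3] ![1,0,2,3] (by decide) (by decide), by rw [Fin.forall_fin_succ]; decide⟩
theorem iso15 : QuiverIso (RepQ (cls M15)) M15 := ⟨Equiv.mk ![0,1,2,3] ![0,1,2,3] (by decide) (by decide), by rw [Fin.forall_fin_succ]; decide⟩
theorem iso16 : QuiverIso (RepQ (cls M16)) M16 := ⟨Equiv.mk ![0,1,3,2] ![0,1,3,2] (by decide) (by decide), by rw [Fin.forall_fin_succ]; decide⟩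
theorem iso17 : QuiverIso (RepQ (cls M17)) M17 := ⟨Equiv.mk ![0,2,1,3] ![0,2,1,3] (by decide) (by decide), by rw [Fin.forall_fin_succ]; decide⟩
theorem iso18 : QuiverIso (RepQ (cls M18)) M18 := ⟨Equiv.mk ![2,0,1,3] ![1,2,0,3] (by decide) (by decide), by rw [Fin.forall_fin_succ]; decide⟩
theorem iso19 : QuiverIso (RepQ (cls M19)) M19 := ⟨Equiv.mk ![0,2,3,1] ![0,3,1,2] (by decide) (by decide), by rw [Fin.forall_fin_succ]; decide⟩
theorem iso20 : QuiverIso (RepQ (cls M20)) M20 := ⟨Equiv.mk ![0,3,1,2] ![0,2,3,1] (by decide) (by decide), by rw [Fin.forall_fin_succ]; decide⟩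
theorem iso21 : QuiverIso (RepQ (cls M21)) M21 := ⟨Equiv.mk ![0,3,2,1] ![0,3,2,1] (by decide) (by decide), by rw [Fin.forall_fin_succ]; decide⟩
theorem iso22 : QuiverIso (RepQ (cls M22)) M22 := ⟨Equiv.mk ![3,0,1,2] ![1,2,3,0] (by decide) (by decide), by rw [Fin.forall_fin_succ]; decide⟩
theorem iso23 : QuiverIso (RepQ (cls M23)) M23 := ⟨Equiv.mk ![1,0,2,3] ![1,0,2,3] (by decide) (by decide), by rw [Fin.forall_fin_succ]; decide⟩
theorem iso24 : QuiverIso (RepQ (cls M24)) M24 := ⟨Equiv.mk ![2,0,1,3] ![1,2,0,3] (by decide) (by decide), by rw [Fin.forall_fin_succ]; decide⟩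
theorem iso25 : QuiverIso (RepQ (cls M25)) M25 := ⟨Equiv.mk ![3,0,1,2] ![1,2,3,0] (by decide) (by decide), by rw [Fin.forall_fin_succ]; decide⟩
theorem iso26 : QuiverIso (RepQ (cls M26)) M26 := ⟨Equiv.mk ![1,0,2,3] ![1,0,2,3] (by decide) (by decide), by rw [Fin.forall_fin_succ]; decide⟩
theorem iso27 : QuiverIso (RepQ (cls M27)) M27 := ⟨Equiv.mk ![1,3,0,2] ![2,0,3,1] (by decide) (by decide), by rw [Fin.forall_fin_succ]; decide⟩
theorem iso28 : QuiverIso (RepQ (cls M28)) M28 := ⟨Equiv.mk ![1,2,0,3] ![2,0,1,3] (by decide) (by decide), by rw [Fin.forall_fin_succ]; decide⟩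
theorem iso29 : QuiverIso (RepQ (cls M29)) M29 := ⟨Equiv.mk ![3,2,0,1] ![2,3,1,0] (by decide) (by decide), by rw [Fin.forall_fin_succ]; decide⟩
theorem iso30 : QuiverIso (RepQ (cls M30)) M30 := ⟨Equiv.mk ![2,3,0,1] ![2,3,0,1] (by decide) (by decide), by rw [Fin.forall_fin_succ]; decide⟩
theorem iso31 : QuiverIso (RepQ (cls M31)) M31 := ⟨Equiv.mk ![3,1,0,2] ![2,1,3,0] (by decide) (by decide), by rw [Fin.forall_fin_succ]; decide⟩
theorem iso32 : QuiverIso (RepQ (cls M32)) M32 := ⟨Equiv.mk ![1,3,0,2] ![2,0,3,1] (by decide) (by decide), by rw [Fin.forall_fin_succ]; decide⟩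
theorem iso33 : QuiverIso (RepQ (cls M33)) M33 := ⟨Equiv.mk ![2,0,1,3] ![1,2,0,3] (by decide) (by decide), by rw [Fin.forall_fin_succ]; decide⟩
theorem iso34 : QuiverIso (RepQ (cls M34)) M34 := ⟨Equiv.mk ![2,3,0,1] ![2,3,0,1] (by decide) (by decide), by rw [Fin.forall_fin_succ]; decide⟩
theorem iso35 : QuiverIso (RepQ (cls M35)) M35 := ⟨Equiv.mk ![2,1,0,3] ![2,1,0,3] (by decide) (by decide), by rw [Fin.forall_fin_succ]; decide⟩
theorem iso36 : QuiverIso (RepQ (cls M36)) M36 := ⟨Equiv.mk ![2,1,0,3] ![2,1,0,3] (by decide) (by decide), by rw [Fin.forall_fin_succ]; decide⟩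
theorem iso37 : QuiverIso (RepQ (cls M37)) M37 := ⟨Equiv.mk ![1,2,0,3] ![2,0,1,3] (by decide) (by decide), by rw [Fin.forall_fin_succ]; decide⟩
theorem iso38 : QuiverIso (RepQ (cls M38)) M38 := ⟨Equiv.mk ![3,0,1,2] ![1,2,3,0] (by decide) (by decide), by rw [Fin.forall_fin_succ]; decide⟩
theorem iso39 : QuiverIso (RepQ (cls M39)) M39 := ⟨Equiv.mk ![3,2,0,1] ![2,3,1,0] (by decide) (by decide), by rw [Fin.forall_fin_succ]; decide⟩
theorem iso40 : QuiverIso (RepQ (cls M40)) M40 := ⟨Equiv.mk ![3,1,0,2] ![2,1,3,0] (by decide) (by decide), by rw [Fin.forall_fin_succ]; decide⟩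
theorem iso41 : QuiverIso (RepQ (cls M41)) M41 := ⟨Equiv.mk ![1,0,2,3] ![1,0,2,3] (by decide) (by decide), by rw [Fin.forall_fin_succ]; decide⟩
theorem iso42 : QuiverIso (RepQ (cls M42)) M42 := ⟨Equiv.mk ![1,3,0,2] ![2,0,3,1] (by decide) (by decide), by rw [Fin.forall_fin_succ]; decide⟩
theorem iso43 : QuiverIso (RepQ (cls M43)) M43 := ⟨Equiv.mk ![1,2,0,3] ![2,0,1,3] (by decide) (by decide), by rw [Fin.forall_fin_succ]; decide⟩
theorem iso44 : QuiverIso (RepQ (cls M44)) M44 := ⟨Equiv.mk ![2,0,1,3] ![1,2,0,3] (by decide) (by decide), by rw [Fin.forall_fin_succ]; decide⟩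
theorem iso45 : QuiverIso (RepQ (cls M45)) M45 := ⟨Equiv.mk ![2,3,0,1] ![2,3,0,1] (by decide) (by decide), by rw [Fin.forall_fin_succ]; decide⟩
theorem iso46 : QuiverIso (RepQ (cls M46)) M46 := ⟨Equiv.mk ![2,1,0,3] ![2,1,0,3] (by decide) (by decide), by rw [Fin.forall_fin_succ]; decide⟩
theorem iso47 : QuiverIso (RepQ (cls M47)) M47 := ⟨Equiv.mk ![3,0,1,2] ![1,2,3,0] (by decide) (by decide), by rw [Fin.forall_fin_succ]; decide⟩
theorem iso48 : QuiverIso (RepQ (cls M48)) M48 := ⟨Equiv.mk ![3,2,0,1] ![2,3,1,0] (by decide) (by decide), by rw [Fin.forall_fin_succ]; decide⟩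
theorem iso49 : QuiverIso (RepQ (cls M49)) M49 := ⟨Equiv.mk ![3,1,0,2] ![2,1,3,0] (by decide) (by decide), by rw [Fin.forall_fin_succ]; decide⟩

theorem hclosed : ∀ B ∈ L, ∀ k : Fin 4, mutate B k ∈ L := by decide

theorem memL_of_equiv : ∀ B, MutationEquiv BD4 B → B ∈ L := by
  intro B h
  induction h with
  | refl => decide
  | tail _ hstep ih => obtain ⟨k, rfl⟩ := hstep; exact hclosed _ ih k

theorem hreachL : ∀ B ∈ L, MutationEquiv BD4 B := by
  intro B hB
  simp only [L, List.mem_cons, List.not_mem_nil, or_false] at hB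
  rcases hB with rfl | rfl | rfl | rfl | rfl | rfl | rfl | rfl | rfl | rfl | rfl | rfl | rfl | rfl | rfl | rfl | rfl | rfl | rfl | rfl | rfl | rfl | rfl | rfl | rfl | rfl | rfl | rfl | rfl | rfl | rfl | rfl | rfl | rfl | rfl | rfl | rfl | rfl | rfl | rfl | rfl | rfl | rfl | rfl | rfl | rfl | rfl | rfl | rfl | rfl
  exacts [hM0, hM1, hM2, hM3, hM4, hM5, hM6, hM7, hM8, hM9, hM10, hM11, hM12, hM13, hM14, hM15, hM16, hM17, hM18, hM19, hM20, hM21, hM22, hM23, hM24, hM25, hM26, hM27, hM28, hM29, hM30, hM31, hM32, hM33, hM34, hM35, hM36, hM37, hM38, hM39, hM40, hM41, hM42, hM43, hM44, hM45, hM46, hM47, hM48, hM49]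

theorem key : ∀ B ∈ L, QuiverIso (RepQ (cls B)) B := by
  intro B hB
  simp only [L, List.mem_cons, List.not_mem_nil, or_false] at hB
  rcases hB with rfl | rfl | rfl | rfl | rfl | rfl | rfl | rfl | rfl | rfl | rfl | rfl | rfl | rfl | rfl | rfl | rfl | rfl | rfl | rfl | rfl | rfl | rfl | rfl | rfl | rfl | rfl | rfl | rfl | rfl | rfl | rfl | rfl | rfl | rfl | rfl | rfl | rfl | rfl | rfl | rfl | rfl | rfl | rfl | rfl | rfl | rfl | rfl | rfl | rfl
  exacts [iso0, iso1, iso2, iso3, iso4, iso5, iso6, iso7, iso8, iso9, iso10, iso11, iso12, iso13, iso14, iso15, iso16, iso17, iso18, iso19, iso20, iso21, iso22, iso23, iso24, iso25, iso26, iso27, iso28, iso29, iso30, iso31, iso32, iso33, iso34, iso35, iso36, iso37, iso38, iso39, iso40, iso41, iso42, iso43, iso44, iso45, iso46, iso47, iso48, iso49]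

theorem QuiverIso.symm' {m : ℕ} {B B' : Matrix (Fin m) (Fin m) ℤ}
    (h : QuiverIso B B') : QuiverIso B' B := by
  obtain ⟨σ, hσ⟩ := h
  refine ⟨σ.symm, fun i j => ?_⟩
  have := hσ (σ.symm i) (σ.symm j)
  simpa using this.symm

theorem QuiverIso.trans' {m : ℕ} {B B' B'' : Matrix (Fin m) (Fin m) ℤ}
    (h1 : QuiverIso B B') (h2 : QuiverIso B' B'') : QuiverIso B B'' := by
  obtain ⟨σ, hσ⟩ := h1
  obtain ⟨τ, hτ⟩ := h2
  exact ⟨σ.trans τ, fun i j => (hτ (σ i) (σ j)).trans (hσ i j)⟩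

set_option maxHeartbeats 4000000 in
theorem repNE : ∀ a b : Fin 6, a ≠ b → ¬ QuiverIso (RepQ a) (RepQ b) := by
  unfold QuiverIso
  show ∀ a b : Fin 6, a ≠ b → ¬ ∃ σ : Equiv.Perm (Fin 4), ∀ i j : Fin 4,
    (id (RepQ b) : Fin 4 → Fin 4 → ℤ) (σ i) (σ j) = (id (RepQ a) : Fin 4 → Fin 4 → ℤ) i j
  decide

set_option maxHeartbeats 1000000 in
theorem clsRep : ∀ c : Fin 6, cls (RepQ c) = c := by decide

theorem hreachRep : ∀ c : Fin 6, MutationEquiv BD4 (RepQ c) := by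
  intro c
  fin_cases c
  exacts [hM0, hM1, hM2, hM5, hM8, hM15]

/-- the mutation class of the quiver `D_4` contains exactly 6
quivers up to isomorphism. -/
theorem stmt_19 :
    Nat.card
        (Quot fun (B B' : {B : Matrix (Fin 4) (Fin 4) ℤ // MutationEquiv BD4 B}) =>
          QuiverIso B.1 B'.1) = 6 := by
  have hresp : ∀ x y : {B : Matrix (Fin 4) (Fin 4) ℤ // MutationEquiv BD4 B},
      QuiverIso x.1 y.1 → cls x.1 = cls y.1 := by
    intro x y hxy
    have hx := key x.1 (memL_of_equiv _ x.2)
    have hy := key y.1 (memL_of_equiv _ y.2)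
    by_contra hne
    exact repNE _ _ hne (hx.trans' (hxy.trans' hy.symm'))
  refine Nat.card_eq_of_equiv_fin (Equiv.ofBijective
    (Quot.lift (fun x => cls x.1) hresp) ⟨?_, ?_⟩)
  · refine Quot.ind fun a => Quot.ind fun b => ?_
    intro h
    apply Quot.sound
    have ha := key a.1 (memL_of_equiv _ a.2)
    have hb := key b.1 (memL_of_equiv _ b.2)
    rw [show cls a.1 = cls b.1 from h] at ha
    exact ha.symm'.trans' hb
  · intro c
    exact ⟨Quot.mk _ ⟨RepQ c, hreachRep c⟩, clsRep c⟩
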